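/- Let (E, Λ, p) be a locally Hilbert space model whose index set Λ is linearly ordered, and fix λ₀ ∈ Λ. Then the orthogonal projection P : E → E onto the complete submodule p λ₀ belongs to 𝓛(E), satisfies ⟨P x, y⟩ = ⟨x, P y⟩ for all x, y ∈ E, P ∘ P = P, and has range equal to p λ₀. In particular, p λ₀ is orthogonally complementable in E, i.e. there exists a symmetric idempotent element of 𝓛(E) with range p λ₀. -/

import Mathlib

open scoped InnerProductSpace

/-- The orthogonal projection of an inner product space onto a complete submodule,
viewed as a continuous linear map of the ambient space into itself. -/
noncomputable def projL {E : Type*} [NormedAddCommGroup E] [InnerProductSpace ℂ E]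
    (K : Submodule ℂ E) [CompleteSpace K] : E →L[ℂ] E :=
  K.subtypeL.comp K.orthogonalProjectionOnto

/-- An element of `𝓛(E)` for the locally Hilbert space model determined by the family `p`:
a linear map on `E` leaving each `p l` invariant, whose restriction to each `p l` is a
continuous (bounded) operator, and which commutes with each orthogonal projection `projL (p l)`. -/
structure LocOp {E : Type*} [NormedAddCommGroup E] [InnerProductSpace ℂ E]
    {Λ : Type*} (p : Λ → Submodule ℂ E) [∀ l, CompleteSpace (p l)] where
  toFun : E →ₗ[ℂ] E
  restr : ∀ l, p l →L[ℂ] p l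
  restr_eq : ∀ l (x : p l), (restr l x : E) = toFun x
  proj_comm : ∀ l (x : E), toFun (projL (p l) x) = projL (p l) (toFun x)

/-- **Proposition 2.3.**  In a locally Hilbert space model `(E, Λ, p)` with linearly
ordered index set, for each `l₀` the orthogonal projection onto `p l₀` belongs to `𝓛(E)`,
is symmetric and idempotent, and has range `p l₀`; hence `p l₀` is orthogonally
complementable in `E`. -/
theorem locallyHilbert_orthogonally_complementable
    {E : Type*} [NormedAddCommGroup E] [InnerProductSpace ℂ E]
    {Λ : Type*} [LinearOrder Λ]
    (p : Λ → Submodule ℂ E) [∀ l, CompleteSpace (p l)]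
    (hmono : Monotone p) (hexh : ∀ x : E, ∃ l, x ∈ p l)
    (l₀ : Λ) :
    ∃ P : LocOp p,
      P.toFun = (projL (p l₀) : E →ₗ[ℂ] E) ∧
      (∀ x y : E, ⟪P.toFun x, y⟫_ℂ = ⟪x, P.toFun y⟫_ℂ) ∧
      (∀ x : E, P.toFun (P.toFun x) = P.toFun x) ∧
      LinearMap.range P.toFun = p l₀ := by
  classical
  -- key commutation lemma
  have key : ∀ l (x : E), projL (p l₀) (projL (p l) x) = projL (p l) (projL (p l₀) x) := by
    intro l x
    rcases le_total l l₀ with h | h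
    · have h1 : projL (p l₀) (projL (p l) x) = projL (p l) x := by
        simpa [projL] using congrArg (Subtype.val)
          (Submodule.orthogonalProjectionOnto_mem_subspace_eq_self
            (⟨_, hmono h (Submodule.orthogonalProjectionOnto (p l) x).2⟩ : p l₀))
      have h2 : Submodule.orthogonalProjectionOnto (p l) ((Submodule.orthogonalProjectionOnto (p l₀) x : E))
          = Submodule.orthogonalProjectionOnto (p l) x :=
        Submodule.orthogonalProjectionOnto_starProjection_of_le (hmono h) x
      simp [projL] at h1 h2 ⊢
      rw [h1]; exact (congrArg Subtype.val h2).symm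
    · have h1 : Submodule.orthogonalProjectionOnto (p l₀) ((Submodule.orthogonalProjectionOnto (p l) x : E))
          = Submodule.orthogonalProjectionOnto (p l₀) x :=
        Submodule.orthogonalProjectionOnto_starProjection_of_le (hmono h) x
      have h2 : projL (p l) (projL (p l₀) x) = projL (p l₀) x := by
        simpa [projL] using congrArg (Subtype.val)
          (Submodule.orthogonalProjectionOnto_mem_subspace_eq_self
            (⟨_, hmono h (Submodule.orthogonalProjectionOnto (p l₀) x).2⟩ : p l))
      simp [projL] at h1 h2 ⊢
      rw [h2]; exact congrArg Subtype.val h1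
  have hmem : ∀ l (x : p l), projL (p l₀) (x : E) ∈ p l := by
    intro l x
    rcases le_total l l₀ with h | h
    · have : projL (p l₀) (x : E) = (x : E) := by
        simpa [projL] using congrArg (Subtype.val)
          (Submodule.orthogonalProjectionOnto_mem_subspace_eq_self (⟨(x : E), hmono h x.2⟩ : p l₀))
      rw [this]; exact x.2
    · exact hmono h (Submodule.orthogonalProjectionOnto (p l₀) (x : E)).2
  refine ⟨⟨(projL (p l₀) : E →ₗ[ℂ] E),
      fun l => ContinuousLinearMap.codRestrict ((projL (p l₀)).comp (p l).subtypeL)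
        (p l) (fun x => hmem l x),
      fun l x => rfl, fun l x => key l x⟩, rfl, ?_, ?_, ?_⟩
  · intro x y
    simpa [projL] using Submodule.inner_starProjection_left_eq_right (p l₀) x y
  · intro x
    simpa [projL] using congrArg (Subtype.val)
      (Submodule.orthogonalProjectionOnto_mem_subspace_eq_self (Submodule.orthogonalProjectionOnto (p l₀) x))
  · apply le_antisymm
    · rintro _ ⟨x, rfl⟩
      exact (Submodule.orthogonalProjectionOnto (p l₀) x).2
    · intro x hx
      refine ⟨x, ?_⟩
      simpa [projL] using congrArg (Subtype.val)
        (Submodule.orthogonalProjectionOnto_mem_subspace_eq_self (⟨x, hx⟩ : p l₀))
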